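/- Let P be the bidirectional path on vertices v₁,…,v_n (n ≥ 2) with directed edges (v_i, v_{i+1}) and (v_{i+1}, v_i) for all 1 ≤ i ≤ n−1, where for 2 ≤ i ≤ n−1 the edge from v_{i−1} to v_i has weight l_i > 0 and the edge from v_{i+1} to v_i has weight r_i > 0. Then ept_rzf(P, v₁) = Σ_{i=2}^{n−1} (l_i + r_i)/l_i + 1, and symmetrically ept_rzf(P, v_n) = Σ_{i=2}^{n−1} (l_i + r_i)/r_i + 1. -/

import Mathlib

open scoped ENNReal NNReal

namespace RZF

variable {V : Type*} [Fintype V] [DecidableEq V]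

/-- Probability that the white vertex `x` turns blue in one round of weighted
randomized zero forcing with weights `w`, given the current blue set `B`
(`0` when the total incoming weight of `x` is `0`). -/
noncomputable def turnProb (w : V → V → ℝ≥0) (B : Finset V) (x : V) : ℝ≥0 :=
  (∑ u ∈ B, w u x) / ∑ u, w u x

/-- One-round transition probability of the RZF Markov chain from blue set `B`
to blue set `C`: each white vertex independently turns blue with probability
`turnProb w B ·`, and blue vertices stay blue. -/
noncomputable def stepProb (w : V → V → ℝ≥0) (B C : Finset V) : ℝ≥0∞ :=
  if B ⊆ C then
    (∏ x ∈ C \ B, (turnProb w B x : ℝ≥0∞)) *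
      ∏ x ∈ Cᶜ, (1 - (turnProb w B x : ℝ≥0∞))
  else 0

/-- Distribution of the blue set after `t` rounds, started from `S`. -/
noncomputable def state (w : V → V → ℝ≥0) (S : Finset V) : ℕ → Finset V → ℝ≥0∞
  | 0 => fun C => if C = S then 1 else 0
  | t + 1 => fun C => ∑ B : Finset V, state w S t B * stepProb w B C

/-- Expected propagation time `∑ₜ P(Bₜ ≠ V(G))`; this equals `E[τ]` when the
all-blue state is reachable from `S`, and `∞` otherwise. -/
noncomputable def ept (w : V → V → ℝ≥0) (S : Finset V) : ℝ≥0∞ :=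
  ∑' t : ℕ, ∑ C ∈ Finset.univ.filter (fun C : Finset V => C ≠ Finset.univ),
    state w S t C

/-- Minimum expected propagation time over singleton starting sets. -/
noncomputable def eptMin (w : V → V → ℝ≥0) : ℝ≥0∞ :=
  ⨅ v : V, ept w {v}

/-- The weight function of an unweighted directed graph: weight `1` on each
edge and `0` otherwise, so that `turnProb` is the fraction of in-neighbors
that are blue. -/
def unweight (adj : V → V → Prop) [DecidableRel adj] : V → V → ℝ≥0 :=
  fun u v => if adj u v then 1 else 0

end RZF

/-- `reachIn adj t a b` : there is a directed path of length at most `t`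
from `a` to `b` in the directed graph with adjacency relation `adj`. -/
def reachIn {V : Type*} (adj : V → V → Prop) : ℕ → V → V → Prop
  | 0, a, b => a = b
  | t + 1, a, b => reachIn adj t a b ∨ ∃ c, reachIn adj t a c ∧ adj c b

/-- The weight function of the weighted bidirectional path on vertices
`v₁, …, vₙ` (vertex `vᵢ` is `(⟨i - 1, _⟩ : Fin n)`): the edge from `vᵢ₋₁`
to `vᵢ` has weight `l i`, and the edge from `vᵢ₊₁` to `vᵢ` has weight `r i`. -/
noncomputable def pathWeight (n : ℕ) (l r : ℕ → ℝ≥0) : Fin n → Fin n → ℝ≥0 :=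
  fun u v =>
    if (u : ℕ) + 1 = (v : ℕ) then l ((v : ℕ) + 1)
    else if (v : ℕ) + 1 = (u : ℕ) then r ((v : ℕ) + 1)
    else 0


namespace RZFproof

private lemma aux_tsum (f g : ℕ → ℝ≥0∞) (q a c : ℝ≥0∞)
    (hft : ∀ t, f t ≠ ∞) (hq1 : q ≤ 1) (hq0 : q ≠ 0)
    (h0 : f 0 = a) (ha : a ≠ ∞) (hc : (∑' t, g t) = c) (hct : c ≠ ∞)
    (hrec : ∀ t, f (t + 1) = (1 - q) * f t + g t) :
    (∑' t, f t) ≠ ∞ ∧ q * ∑' t, f t = a + c := by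
  set S := ∑' t, f t with hS
  have key : ∀ T, q * ∑ t ∈ Finset.range T, f t ≤ a + c := by
    intro T
    set s := ∑ t ∈ Finset.range T, f t with hs
    have hsne : s ≠ ∞ :=
      (ENNReal.sum_lt_top.mpr fun t _ => (hft t).lt_top).ne
    have hstep : ∑ t ∈ Finset.range (T + 1), f t
        = a + ((1 - q) * s + ∑ t ∈ Finset.range T, g t) := by
      rw [Finset.sum_range_succ' f T, h0]
      simp only [hrec]
      rw [Finset.sum_add_distrib, ← Finset.mul_sum, ← hs, add_comm]
    have hmono : s ≤ ∑ t ∈ Finset.range (T + 1), f t :=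
      Finset.sum_le_sum_of_subset (Finset.range_subset_range.2 (Nat.le_succ T))
    have hgle : ∑ t ∈ Finset.range T, g t ≤ c := hc ▸ ENNReal.sum_le_tsum _
    have h1 : q * s + s ≤ (a + c) + s := by
      calc q * s + s ≤ q * s + (a + ((1 - q) * s + ∑ t ∈ Finset.range T, g t)) := by
            exact add_le_add_right (hstep ▸ hmono) _
        _ = (a + ∑ t ∈ Finset.range T, g t) + ((1 - q) * s + q * s) := by ring
        _ = (a + ∑ t ∈ Finset.range T, g t) + s := by
            rw [← add_mul, tsub_add_cancel_of_le hq1, one_mul]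
        _ ≤ (a + c) + s := by gcongr
    exact (ENNReal.add_le_add_iff_right hsne).1 h1
  have hqS : q * S ≤ a + c := by
    have h2 : q * S = ⨆ T, q * ∑ t ∈ Finset.range T, f t := by
      rw [hS, ENNReal.tsum_eq_iSup_nat, ENNReal.mul_iSup]
    rw [h2]
    exact iSup_le key
  have hacne : a + c ≠ ∞ := ENNReal.add_ne_top.2 ⟨ha, hct⟩
  have hSne : S ≠ ∞ := by
    intro h
    rw [h, ENNReal.mul_top hq0] at hqS
    exact hacne (top_le_iff.1 hqS)
  refine ⟨hSne, ?_⟩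
  clear hS
  have heq : S = a + ((1 - q) * S + c) := by
    have hshift : ∑' t, f (t + 1) = (1 - q) * S + c := by
      calc ∑' t, f (t + 1) = ∑' t, ((1 - q) * f t + g t) := by simp only [hrec]
        _ = (1 - q) * S + c := by rw [ENNReal.tsum_add, ENNReal.tsum_mul_left, hc]
    calc S = f 0 + ∑' t, f (t + 1) := tsum_eq_zero_add' ENNReal.summable
      _ = a + ((1 - q) * S + c) := by rw [h0, hshift]
  have hsub : (1 - q) * S = S - q * S := by
    rw [ENNReal.sub_mul fun _ _ => hSne, one_mul]
  have hle : q * S ≤ S := by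
    calc q * S ≤ 1 * S := mul_le_mul_left hq1 S
      _ = S := one_mul S
  have h2 : S + q * S = S + (a + c) := by
    calc S + q * S = (a + ((S - q * S) + c)) + q * S := by rw [← hsub, ← heq]
      _ = ((S - q * S) + q * S) + (a + c) := by ring
      _ = S + (a + c) := by rw [tsub_add_cancel_of_le hle]
  exact (ENNReal.add_right_inj hSne).1 h2

private lemma turnProb_le_one {V : Type*} [Fintype V] [DecidableEq V]
    (w : V → V → ℝ≥0) (B : Finset V) (x : V) : RZF.turnProb w B x ≤ 1 := by
  rw [RZF.turnProb]
  rcases eq_or_lt_of_le (zero_le : (0:ℝ≥0) ≤ ∑ u, w u x) with h | h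
  · rw [← h, div_zero]; exact zero_le_one
  · rw [div_le_one h]
    exact Finset.sum_le_sum_of_subset (Finset.subset_univ B)

private lemma stepProb_le_one {V : Type*} [Fintype V] [DecidableEq V]
    (w : V → V → ℝ≥0) (B C : Finset V) : RZF.stepProb w B C ≤ 1 := by
  rw [RZF.stepProb]
  split_ifs with h
  · refine mul_le_one' (Finset.prod_le_one' (fun x _ => ?_)) (Finset.prod_le_one' (fun x _ => ?_))
    · exact_mod_cast turnProb_le_one w B x
    · exact tsub_le_self
  · exact zero_le_one

private def Iset {V : Type*} [DecidableEq V] (v : ℕ → V) (k : ℕ) : Finset V :=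
  (Finset.range (k + 1)).image v

private lemma Iset_def {V : Type*} [DecidableEq V] (v : ℕ → V) (k : ℕ) :
    Iset v k = (Finset.range (k + 1)).image v := rfl

private lemma chain_ept {V : Type*} [Fintype V] [DecidableEq V]
    (w : V → V → ℝ≥0) (n : ℕ) (hn : 2 ≤ n) (v : ℕ → V) (q : ℕ → ℝ≥0)
    (hsurj : (Finset.range n).image v = Finset.univ)
    (hnm : ∀ k, k < n - 1 → v (k + 1) ∉ Iset v k)
    (hq : ∀ k, k < n - 1 → RZF.turnProb w (Iset v k) (v (k + 1)) = q k)
    (h0 : ∀ k, k < n - 1 → ∀ y, y ∉ Iset v (k + 1) →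
      RZF.turnProb w (Iset v k) y = 0)
    (hqpos : ∀ k, k < n - 1 → 0 < q k) :
    RZF.ept w {v 0} = ∑ k ∈ Finset.range (n - 1), ((q k : ℝ≥0∞))⁻¹ := by
  have hIn : Iset v (n - 1) = Finset.univ := by
    have h : n - 1 + 1 = n := by omega
    rw [Iset_def]; rw [h]; exact hsurj
  have hmono : ∀ j k, j ≤ k → Iset v j ⊆ Iset v k := fun j k h =>
    Finset.image_subset_image (Finset.range_subset_range.2 (by omega))
  have hself : ∀ k, v k ∈ Iset v k := fun k =>
    Finset.mem_image_of_mem v (Finset.mem_range.2 (Nat.lt_succ_self k))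
  have hvnot : ∀ j k, j < k → k ≤ n - 1 → v k ∉ Iset v j := by
    intro j k hjk hk hmem
    have h1 : v k ∉ Iset v (k - 1) := by
      have h2 := hnm (k - 1) (by omega)
      have h3 : k - 1 + 1 = k := by omega
      rw [h3] at h2
      exact h2
    exact h1 (hmono j (k - 1) (by omega) hmem)
  have hIinj : ∀ j k, j ≤ n - 1 → k ≤ n - 1 → Iset v j = Iset v k → j = k := by
    intro j k hj hk hjk
    by_contra hne
    rcases Nat.lt_or_ge j k with h | h
    · exact hvnot j k h hk (by rw [hjk]; exact hself k)
    · exact hvnot k j (by omega) hj (by rw [← hjk]; exact hself j)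
  have hIne : ∀ k, k < n - 1 → Iset v k ≠ Finset.univ := fun k hk h =>
    absurd (hIinj k (n - 1) (by omega) le_rfl (h.trans hIn.symm)) (by omega)
  have hinsert : ∀ k, Iset v (k + 1) = insert (v (k + 1)) (Iset v k) := by
    intro k
    rw [Iset_def, Iset_def, Finset.range_add_one, Finset.image_insert]
  -- step probabilities
  have hprod_one : ∀ k, k < n - 1 →
      ∏ x ∈ (Iset v (k + 1))ᶜ, (1 - (RZF.turnProb w (Iset v k) x : ℝ≥0∞)) = 1 := by
    intro k hk
    apply Finset.prod_eq_one
    intro x hx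
    rw [h0 k hk x (Finset.mem_compl.1 hx)]
    simp
  have hstep_self : ∀ k, k < n - 1 →
      RZF.stepProb w (Iset v k) (Iset v k) = 1 - (q k : ℝ≥0∞) := by
    intro k hk
    rw [RZF.stepProb, if_pos (Finset.Subset.refl _), Finset.sdiff_self,
      Finset.prod_empty, one_mul]
    have hcompl : (Iset v k)ᶜ = insert (v (k + 1)) ((Iset v (k + 1))ᶜ) := by
      rw [hinsert k, Finset.compl_insert,
        Finset.insert_erase (Finset.mem_compl.2 (hnm k hk))]
    rw [hcompl, Finset.prod_insert (fun h =>
      (Finset.mem_compl.1 h) (hself (k + 1))), hq k hk, hprod_one k hk, mul_one]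
  have hstep_next : ∀ k, k < n - 1 →
      RZF.stepProb w (Iset v k) (Iset v (k + 1)) = (q k : ℝ≥0∞) := by
    intro k hk
    rw [RZF.stepProb, if_pos (hmono k (k + 1) (by omega))]
    have hsd : Iset v (k + 1) \ Iset v k = {v (k + 1)} := by
      ext x
      simp only [hinsert k, Finset.mem_sdiff, Finset.mem_insert, Finset.mem_singleton]
      constructor
      · rintro ⟨h1 | h1, h2⟩
        · exact h1
        · exact absurd h1 h2
      · rintro rfl
        exact ⟨Or.inl rfl, hnm k hk⟩
    rw [hsd, Finset.prod_singleton, hq k hk, hprod_one k hk, mul_one]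
  have hstep_zero : ∀ k, k < n - 1 → ∀ C, C ≠ Iset v k → C ≠ Iset v (k + 1) →
      RZF.stepProb w (Iset v k) C = 0 := by
    intro k hk C h1 h2
    rw [RZF.stepProb]
    split_ifs with hBC
    · by_cases hC : C ⊆ Iset v (k + 1)
      · exfalso
        by_cases hxC : v (k + 1) ∈ C
        · refine h2 (Finset.Subset.antisymm (by rw [hinsert k] at hC ⊢; exact hC) ?_)
          rw [hinsert k]
          exact Finset.insert_subset hxC hBC
        · refine h1 (Finset.Subset.antisymm ?_ hBC)
          rw [hinsert k] at hC
          exact (Finset.subset_insert_iff_of_notMem hxC).1 hC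
      · obtain ⟨x, hxC, hxI⟩ := Finset.not_subset.1 hC
        have hx0 : RZF.turnProb w (Iset v k) x = 0 := h0 k hk x hxI
        have hxB : x ∉ Iset v k := fun h => hxI (hmono k (k + 1) (by omega) h)
        rw [Finset.prod_eq_zero (Finset.mem_sdiff.2 ⟨hxC, hxB⟩) (by rw [hx0]; simp),
          zero_mul]
    · rfl
  have hstep_univ0 : ∀ C : Finset V, C ≠ Finset.univ →
      RZF.stepProb w Finset.univ C = 0 := by
    intro C hC
    rw [RZF.stepProb, if_neg fun h => hC (Finset.univ_subset_iff.1 h)]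
  -- support of the chain
  have hsupp : ∀ t C, RZF.state w (Iset v 0) t C ≠ 0 → ∃ k, k ≤ n - 1 ∧ C = Iset v k := by
    intro t
    induction t with
    | zero =>
      intro C hC
      simp only [RZF.state] at hC
      refine ⟨0, by omega, ?_⟩
      by_contra h
      rw [if_neg h] at hC
      exact hC rfl
    | succ t ih =>
      intro C hC
      simp only [RZF.state] at hC
      obtain ⟨B, -, hB⟩ := Finset.exists_ne_zero_of_sum_ne_zero hC
      have hs : RZF.state w (Iset v 0) t B ≠ 0 := fun h => hB (by rw [h, zero_mul])
      have hp : RZF.stepProb w B C ≠ 0 := fun h => hB (by rw [h, mul_zero])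
      obtain ⟨j, hj, rfl⟩ := ih B hs
      rcases Nat.lt_or_ge j (n - 1) with hlt | hge
      · by_cases h1 : C = Iset v j
        · exact ⟨j, by omega, h1⟩
        by_cases h2 : C = Iset v (j + 1)
        · exact ⟨j + 1, by omega, h2⟩
        · exact absurd (hstep_zero j hlt C h1 h2) hp
      · have hj' : j = n - 1 := by omega
        subst hj'
        rw [hIn] at hp
        by_cases hCu : C = Finset.univ
        · exact ⟨n - 1, le_rfl, by rw [hCu, hIn]⟩
        · exact absurd (hstep_univ0 C hCu) hp
  -- finiteness of the state
  have hfin : ∀ t C, RZF.state w (Iset v 0) t C ≠ ∞ := by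
    intro t
    induction t with
    | zero =>
      intro C
      simp only [RZF.state]
      split_ifs <;> simp
    | succ t ih =>
      intro C
      simp only [RZF.state]
      refine (ENNReal.sum_lt_top.2 fun B _ => ?_).ne
      calc RZF.state w (Iset v 0) t B * RZF.stepProb w B C
          ≤ RZF.state w (Iset v 0) t B * 1 := mul_le_mul_right (stepProb_le_one w B C) _
        _ < ∞ := by rw [mul_one]; exact (ih B).lt_top
  have hq1 : ∀ k, k < n - 1 → q k ≤ 1 := fun k hk =>
    hq k hk ▸ turnProb_le_one w _ _
  -- recursion
  have hrec0 : ∀ t, RZF.state w (Iset v 0) (t + 1) (Iset v 0) =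
      (1 - (q 0 : ℝ≥0∞)) * RZF.state w (Iset v 0) t (Iset v 0) := by
    intro t
    have hn0 : (0:ℕ) < n - 1 := by omega
    simp only [RZF.state]
    rw [Finset.sum_eq_single (Iset v 0)]
    · rw [hstep_self 0 hn0, mul_comm]
    · intro B _ hBne
      by_cases hs : RZF.state w (Iset v 0) t B = 0
      · rw [hs, zero_mul]
      · obtain ⟨j, hj, rfl⟩ := hsupp t B hs
        have hj0 : j ≠ 0 := fun h => hBne (by rw [h])
        rcases Nat.lt_or_ge j (n - 1) with hlt | hge
        · rw [hstep_zero j hlt (Iset v 0)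
            (fun h => hj0 (hIinj j 0 (by omega) (by omega) h.symm))
            (fun h => absurd (hIinj 0 (j + 1) (by omega) (by omega) h) (by omega)),
            mul_zero]
        · have hj' : j = n - 1 := by omega
          subst hj'
          rw [hIn, hstep_univ0 _ (hIne 0 hn0), mul_zero]
    · intro h
      exact absurd (Finset.mem_univ _) h
  have hreck : ∀ k, k + 1 < n - 1 → ∀ t, RZF.state w (Iset v 0) (t + 1) (Iset v (k + 1)) =
      (1 - (q (k + 1) : ℝ≥0∞)) * RZF.state w (Iset v 0) t (Iset v (k + 1)) +
        (q k : ℝ≥0∞) * RZF.state w (Iset v 0) t (Iset v k) := by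
    intro k hk1 t
    have hk : k < n - 1 := by omega
    simp only [RZF.state]
    rw [Fintype.sum_eq_add (Iset v (k + 1)) (Iset v k)
      (fun h => by have := hIinj (k + 1) k (by omega) (by omega) h; omega)
      ?_]
    · rw [hstep_self (k + 1) hk1, hstep_next k hk]
      ring
    · intro B hB12
      obtain ⟨hB1, hB2⟩ := hB12
      by_cases hs : RZF.state w (Iset v 0) t B = 0
      · rw [hs, zero_mul]
      · obtain ⟨j, hj, rfl⟩ := hsupp t B hs
        have hjne1 : j ≠ k + 1 := fun h => hB1 (by rw [h])
        have hjne2 : j ≠ k := fun h => hB2 (by rw [h])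
        rcases Nat.lt_or_ge j (n - 1) with hlt | hge
        · rw [hstep_zero j hlt (Iset v (k + 1))
            (fun h => hjne1 (hIinj j (k + 1) (by omega) (by omega) h.symm))
            (fun h => hjne2 (by
              have := hIinj (k + 1) (j + 1) (by omega) (by omega) h
              omega)), mul_zero]
        · have hj' : j = n - 1 := by omega
          subst hj'
          rw [hIn, hstep_univ0 _ (hIne (k + 1) hk1), mul_zero]
  -- initial values
  have hinit : ∀ k, k ≤ n - 1 → RZF.state w (Iset v 0) 0 (Iset v k) =
      if k = 0 then 1 else 0 := by
    intro k hk
    simp only [RZF.state]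
    by_cases h : k = 0
    · rw [if_pos h, if_pos (by rw [h])]
    · rw [if_neg h, if_neg fun hc => h (hIinj k 0 hk (by omega) hc)]
  -- main induction
  have hmain : ∀ k, k < n - 1 →
      (∑' t, RZF.state w (Iset v 0) t (Iset v k)) ≠ ∞ ∧
      (q k : ℝ≥0∞) * ∑' t, RZF.state w (Iset v 0) t (Iset v k) = 1 := by
    intro k
    induction k with
    | zero =>
      intro hk
      have h := aux_tsum (fun t => RZF.state w (Iset v 0) t (Iset v 0)) (fun _ => 0)
        (q 0 : ℝ≥0∞) 1 0 (fun t => hfin t _)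
        (by exact_mod_cast hq1 0 hk)
        (by exact_mod_cast (hqpos 0 hk).ne')
        (by simp [hinit 0 (by omega)]) (by simp) (by simp) (by simp)
        (fun t => by simpa using hrec0 t)
      exact ⟨h.1, by rw [h.2, add_zero]⟩
    | succ k ih =>
      intro hk
      have ih' := ih (by omega)
      have h := aux_tsum (fun t => RZF.state w (Iset v 0) t (Iset v (k + 1)))
        (fun t => (q k : ℝ≥0∞) * RZF.state w (Iset v 0) t (Iset v k))
        (q (k + 1) : ℝ≥0∞) 0 1 (fun t => hfin t _)
        (by exact_mod_cast hq1 (k + 1) hk)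
        (by exact_mod_cast (hqpos (k + 1) hk).ne')
        (by simp [hinit (k + 1) (by omega)]) (by simp)
        (by rw [ENNReal.tsum_mul_left]; exact ih'.2) (by simp)
        (fun t => by simpa using hreck k hk t)
      exact ⟨h.1, by rw [h.2, zero_add]⟩
  have hSval : ∀ k, k < n - 1 →
      (∑' t, RZF.state w (Iset v 0) t (Iset v k)) = ((q k : ℝ≥0∞))⁻¹ := by
    intro k hk
    obtain ⟨h1, h2⟩ := hmain k hk
    have hq0 : (q k : ℝ≥0∞) ≠ 0 := ENNReal.coe_ne_zero.2 (hqpos k hk).ne'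
    calc (∑' t, RZF.state w (Iset v 0) t (Iset v k))
        = ((q k : ℝ≥0∞)⁻¹ * (q k : ℝ≥0∞)) * ∑' t, RZF.state w (Iset v 0) t (Iset v k) := by
          rw [ENNReal.inv_mul_cancel hq0 ENNReal.coe_ne_top, one_mul]
      _ = (q k : ℝ≥0∞)⁻¹ := by rw [mul_assoc, h2, mul_one]
  -- rows
  have hrow : ∀ t, ∑ C ∈ Finset.univ.filter (fun C : Finset V => C ≠ Finset.univ),
      RZF.state w (Iset v 0) t C
      = ∑ k ∈ Finset.range (n - 1), RZF.state w (Iset v 0) t (Iset v k) := by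
    intro t
    have himg : ∑ C ∈ (Finset.range (n - 1)).image (Iset v), RZF.state w (Iset v 0) t C
        = ∑ k ∈ Finset.range (n - 1), RZF.state w (Iset v 0) t (Iset v k) := by
      refine Finset.sum_image ?_
      intro x hx y hy h
      exact hIinj x y (by have := Finset.mem_range.1 hx; omega)
        (by have := Finset.mem_range.1 hy; omega) h
    rw [← himg]
    refine (Finset.sum_subset ?_ ?_).symm
    · intro C hC
      obtain ⟨k, hk, rfl⟩ := Finset.mem_image.1 hC
      exact Finset.mem_filter.2 ⟨Finset.mem_univ _, hIne k (Finset.mem_range.1 hk)⟩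
    · intro C hC hCn
      by_contra hne
      obtain ⟨k, hk, rfl⟩ := hsupp t C hne
      rcases Nat.lt_or_ge k (n - 1) with hlt | hge
      · exact hCn (Finset.mem_image.2 ⟨k, Finset.mem_range.2 hlt, rfl⟩)
      · have hk' : k = n - 1 := by omega
        subst hk'
        exact (Finset.mem_filter.1 hC).2 hIn
  have hstart : ({v 0} : Finset V) = Iset v 0 := by
    rw [Iset_def]
    simp
  rw [RZF.ept, hstart]
  calc ∑' t, ∑ C ∈ Finset.univ.filter (fun C : Finset V => C ≠ Finset.univ),
        RZF.state w (Iset v 0) t C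
      = ∑' t, ∑ k ∈ Finset.range (n - 1), RZF.state w (Iset v 0) t (Iset v k) := by
        simp only [hrow]
    _ = ∑ k ∈ Finset.range (n - 1), ∑' t, RZF.state w (Iset v 0) t (Iset v k) :=
        Summable.tsum_finsetSum fun i _ => ENNReal.summable
    _ = ∑ k ∈ Finset.range (n - 1), ((q k : ℝ≥0∞))⁻¹ :=
        Finset.sum_congr rfl fun k hk => hSval k (Finset.mem_range.1 hk)

private lemma part1 (m : ℕ) (l r : ℕ → ℝ≥0)
    (hl : ∀ i : ℕ, 2 ≤ i → i ≤ m + 2 → 0 < l i)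
    (hr : ∀ i : ℕ, 1 ≤ i → i ≤ m + 1 → 0 < r i) :
    RZF.ept (pathWeight (m + 2) l r) {(⟨0, by omega⟩ : Fin (m + 2))} =
      (∑ i ∈ Finset.Icc 2 (m + 1),
        ((l i : ℝ≥0∞) + (r i : ℝ≥0∞)) / (l i : ℝ≥0∞)) + 1 := by
  set w := pathWeight (m + 2) l r with hw
  set v : ℕ → Fin (m + 2) := fun i => ⟨min i (m + 1), by omega⟩ with hv
  set q : ℕ → ℝ≥0 :=
    fun k => if k < m then l (k + 2) / (l (k + 2) + r (k + 2)) else 1 with hqdef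
  have hvval : ∀ i, (v i : ℕ) = min i (m + 1) := fun i => rfl
  have hwval : ∀ u x : Fin (m + 2), w u x =
      (if (u : ℕ) + 1 = (x : ℕ) then l ((x : ℕ) + 1)
        else if (x : ℕ) + 1 = (u : ℕ) then r ((x : ℕ) + 1) else 0) := fun u x => rfl
  have hmem : ∀ (k : ℕ) (j : Fin (m + 2)), j ∈ RZFproof.Iset v k ↔ (j : ℕ) ≤ k := by
    intro k j
    simp only [RZFproof.Iset, Finset.mem_image, Finset.mem_range]
    constructor
    · rintro ⟨i, hi, rfl⟩
      rw [hvval]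
      omega
    · intro h
      refine ⟨(j : ℕ), by omega, ?_⟩
      apply Fin.ext
      rw [hvval]
      omega
  -- numerator
  have hnum : ∀ k, k < m + 1 → ∑ u ∈ RZFproof.Iset v k, w u (v (k + 1)) = l (k + 2) := by
    intro k hk
    rw [Finset.sum_eq_single (v k)]
    · rw [hwval, hvval, hvval, if_pos (by omega)]
      congr 1
      omega
    · intro u hu hne
      have h1 : (u : ℕ) ≤ k := (hmem k u).1 hu
      have h2 : (u : ℕ) ≠ k := fun h => hne (Fin.ext (by rw [hvval]; omega))
      rw [hwval, hvval, if_neg (by omega), if_neg (by omega)]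
    · intro h
      exact absurd ((hmem k (v k)).2 (by rw [hvval]; omega)) h
  -- denominator
  have hden : ∀ k, k < m + 1 → ∑ u : Fin (m + 2), w u (v (k + 1)) =
      if k < m then l (k + 2) + r (k + 2) else l (k + 2) := by
    intro k hk
    split_ifs with hkm
    · rw [Fintype.sum_eq_add (v k) (v (k + 2))
        (fun h => by have := congrArg Fin.val h; rw [hvval, hvval] at this; omega)]
      · rw [hwval, hwval, hvval, hvval, hvval, if_pos (by omega),
          if_neg (by omega), if_pos (by omega)]
        have e1 : min (k + 1) (m + 1) + 1 = k + 2 := by omega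
        rw [e1]
      · intro u hu
        obtain ⟨h1, h2⟩ := hu
        have h1' : (u : ℕ) ≠ k := fun h => h1 (Fin.ext (by rw [hvval]; omega))
        have h2' : (u : ℕ) ≠ k + 2 := fun h => h2 (Fin.ext (by rw [hvval]; omega))
        rw [hwval, hvval, if_neg (by omega), if_neg (by omega)]
    · rw [Fintype.sum_eq_single (v k)]
      · rw [hwval, hvval, hvval, if_pos (by omega)]
        congr 1
        omega
      · intro u hne
        have h2 : (u : ℕ) ≠ k := fun h => hne (Fin.ext (by rw [hvval]; omega))
        have hu2 : (u : ℕ) < m + 2 := u.isLt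
        rw [hwval, hvval, if_neg (by omega), if_neg (by omega)]
  have hept := chain_ept w (m + 2) (by omega) v q
    (by
      apply Finset.eq_univ_of_forall
      intro j
      refine Finset.mem_image.2 ⟨(j : ℕ), Finset.mem_range.2 (by omega), ?_⟩
      apply Fin.ext
      rw [hvval]
      omega)
    (by
      intro k hk
      rw [hmem, hvval]
      omega)
    (by
      intro k hk
      have hk' : k < m + 1 := by omega
      rw [RZF.turnProb, hnum k hk', hden k hk', hqdef]
      simp only []
      split_ifs with hkm
      · rfl
      · exact div_self (hl (k + 2) (by omega) (by omega)).ne')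
    (by
      intro k hk y hy
      rw [RZF.turnProb]
      have hnum0 : ∑ u ∈ RZFproof.Iset v k, w u y = 0 := by
        apply Finset.sum_eq_zero
        intro u hu
        have h1 : (u : ℕ) ≤ k := (hmem k u).1 hu
        have h2 : ¬ ((y : ℕ) ≤ k + 1) := fun h => hy ((hmem (k + 1) y).2 h)
        rw [hwval, if_neg (by omega), if_neg (by omega)]
      rw [hnum0, zero_div])
    (by
      intro k hk
      rw [hqdef]
      simp only []
      split_ifs with hkm
      · exact div_pos (hl (k + 2) (by omega) (by omega))
          (add_pos (hl (k + 2) (by omega) (by omega)) (hr (k + 2) (by omega) (by omega)))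
      · exact one_pos)
  have hv0 : (v 0) = (⟨0, by omega⟩ : Fin (m + 2)) := Fin.ext (by simp [hvval])
  rw [hv0] at hept
  rw [hept]
  have hn1 : m + 2 - 1 = m + 1 := by omega
  rw [hn1, Finset.sum_range_succ]
  have hlast : ((q m : ℝ≥0∞))⁻¹ = 1 := by
    rw [hqdef]
    simp
  rw [hlast]
  congr 1
  have hterm : ∀ k, k < m → ((q k : ℝ≥0∞))⁻¹ =
      ((l (k + 2) : ℝ≥0∞) + (r (k + 2) : ℝ≥0∞)) / (l (k + 2) : ℝ≥0∞) := by
    intro k hk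
    have hl' : l (k + 2) ≠ 0 := (hl (k + 2) (by omega) (by omega)).ne'
    have hd0 : l (k + 2) / (l (k + 2) + r (k + 2)) ≠ 0 :=
      (div_pos (hl (k + 2) (by omega) (by omega))
        (add_pos (hl (k + 2) (by omega) (by omega)) (hr (k + 2) (by omega) (by omega)))).ne'
    rw [hqdef]
    simp only [if_pos hk]
    rw [← ENNReal.coe_inv hd0, inv_div, ENNReal.coe_div hl', ENNReal.coe_add]
  calc ∑ k ∈ Finset.range m, ((q k : ℝ≥0∞))⁻¹
      = ∑ k ∈ Finset.range m,
        ((l (k + 2) : ℝ≥0∞) + (r (k + 2) : ℝ≥0∞)) / (l (k + 2) : ℝ≥0∞) :=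
        Finset.sum_congr rfl fun k hk => hterm k (Finset.mem_range.1 hk)
    _ = ∑ i ∈ Finset.Icc 2 (m + 1),
        ((l i : ℝ≥0∞) + (r i : ℝ≥0∞)) / (l i : ℝ≥0∞) := by
        rw [← Finset.Ico_add_one_right_eq_Icc, Finset.sum_Ico_eq_sum_range]
        refine Finset.sum_congr (by congr 1) fun k hk => ?_
        rw [Nat.add_comm 2 k]

private lemma part2 (m : ℕ) (l r : ℕ → ℝ≥0)
    (hl : ∀ i : ℕ, 2 ≤ i → i ≤ m + 2 → 0 < l i)
    (hr : ∀ i : ℕ, 1 ≤ i → i ≤ m + 1 → 0 < r i) :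
    RZF.ept (pathWeight (m + 2) l r) {(⟨m + 1, by omega⟩ : Fin (m + 2))} =
      (∑ i ∈ Finset.Icc 2 (m + 1),
        ((l i : ℝ≥0∞) + (r i : ℝ≥0∞)) / (r i : ℝ≥0∞)) + 1 := by
  set w := pathWeight (m + 2) l r with hw
  set v : ℕ → Fin (m + 2) := fun i => ⟨m + 1 - min i (m + 1), by omega⟩ with hv
  set q : ℕ → ℝ≥0 :=
    fun k => if k < m then r (m + 1 - k) / (l (m + 1 - k) + r (m + 1 - k)) else 1
    with hqdef
  have hvval : ∀ i, (v i : ℕ) = m + 1 - min i (m + 1) := fun i => rfl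
  have hwval : ∀ u x : Fin (m + 2), w u x =
      (if (u : ℕ) + 1 = (x : ℕ) then l ((x : ℕ) + 1)
        else if (x : ℕ) + 1 = (u : ℕ) then r ((x : ℕ) + 1) else 0) := fun u x => rfl
  have hmem : ∀ (k : ℕ) (j : Fin (m + 2)),
      j ∈ RZFproof.Iset v k ↔ m + 1 - k ≤ (j : ℕ) := by
    intro k j
    simp only [RZFproof.Iset, Finset.mem_image, Finset.mem_range]
    constructor
    · rintro ⟨i, hi, rfl⟩
      rw [hvval]
      omega
    · intro h
      have hj : (j : ℕ) < m + 2 := j.isLt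
      refine ⟨m + 1 - (j : ℕ), by omega, ?_⟩
      apply Fin.ext
      rw [hvval]
      omega
  have hnum : ∀ k, k < m + 1 →
      ∑ u ∈ RZFproof.Iset v k, w u (v (k + 1)) = r (m + 1 - k) := by
    intro k hk
    rw [Finset.sum_eq_single (v k)]
    · rw [hwval, hvval, hvval, if_neg (by omega), if_pos (by omega)]
      congr 1
      omega
    · intro u hu hne
      have h1 : m + 1 - k ≤ (u : ℕ) := (hmem k u).1 hu
      have h2 : (u : ℕ) ≠ m + 1 - k := fun h => hne (Fin.ext (by rw [hvval]; omega))
      rw [hwval, hvval, if_neg (by omega), if_neg (by omega)]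
    · intro h
      exact absurd ((hmem k (v k)).2 (by rw [hvval]; omega)) h
  have hden : ∀ k, k < m + 1 → ∑ u : Fin (m + 2), w u (v (k + 1)) =
      if k < m then l (m + 1 - k) + r (m + 1 - k) else r (m + 1 - k) := by
    intro k hk
    split_ifs with hkm
    · rw [Fintype.sum_eq_add (v (k + 2)) (v k)
        (fun h => by have := congrArg Fin.val h; rw [hvval, hvval] at this; omega)]
      · rw [hwval, hwval, hvval, hvval, hvval, if_pos (by omega),
          if_neg (by omega), if_pos (by omega)]
        have e1 : m + 1 - min (k + 1) (m + 1) + 1 = m + 1 - k := by omega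
        rw [e1]
      · intro u hu
        obtain ⟨h1, h2⟩ := hu
        have h1' : (u : ℕ) ≠ m - 1 - k := fun h => h1 (Fin.ext (by rw [hvval]; omega))
        have h2' : (u : ℕ) ≠ m + 1 - k := fun h => h2 (Fin.ext (by rw [hvval]; omega))
        rw [hwval, hvval, if_neg (by omega), if_neg (by omega)]
    · rw [Fintype.sum_eq_single (v k)]
      · rw [hwval, hvval, hvval, if_neg (by omega), if_pos (by omega)]
        congr 1
        omega
      · intro u hne
        have h2 : (u : ℕ) ≠ m + 1 - k := fun h => hne (Fin.ext (by rw [hvval]; omega))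
        have hu2 : (u : ℕ) < m + 2 := u.isLt
        rw [hwval, hvval, if_neg (by omega), if_neg (by omega)]
  have hept := chain_ept w (m + 2) (by omega) v q
    (by
      apply Finset.eq_univ_of_forall
      intro j
      have hj : (j : ℕ) < m + 2 := j.isLt
      refine Finset.mem_image.2 ⟨m + 1 - (j : ℕ), Finset.mem_range.2 (by omega), ?_⟩
      apply Fin.ext
      rw [hvval]
      omega)
    (by
      intro k hk
      rw [hmem, hvval]
      omega)
    (by
      intro k hk
      have hk' : k < m + 1 := by omega
      rw [RZF.turnProb, hnum k hk', hden k hk', hqdef]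
      simp only []
      split_ifs with hkm
      · rfl
      · exact div_self (hr (m + 1 - k) (by omega) (by omega)).ne')
    (by
      intro k hk y hy
      rw [RZF.turnProb]
      have hnum0 : ∑ u ∈ RZFproof.Iset v k, w u y = 0 := by
        apply Finset.sum_eq_zero
        intro u hu
        have h1 : m + 1 - k ≤ (u : ℕ) := (hmem k u).1 hu
        have h2 : ¬ (m + 1 - (k + 1) ≤ (y : ℕ)) := fun h => hy ((hmem (k + 1) y).2 h)
        have hk' : k < m + 1 := by omega
        rw [hwval, if_neg (by omega), if_neg (by omega)]
      rw [hnum0, zero_div])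
    (by
      intro k hk
      rw [hqdef]
      simp only []
      split_ifs with hkm
      · exact div_pos (hr (m + 1 - k) (by omega) (by omega))
          (add_pos (hl (m + 1 - k) (by omega) (by omega))
            (hr (m + 1 - k) (by omega) (by omega)))
      · exact one_pos)
  have hv0 : (v 0) = (⟨m + 1, by omega⟩ : Fin (m + 2)) := Fin.ext (by simp [hvval])
  rw [hv0] at hept
  rw [hept]
  have hn1 : m + 2 - 1 = m + 1 := by omega
  rw [hn1, Finset.sum_range_succ]
  have hlast : ((q m : ℝ≥0∞))⁻¹ = 1 := by
    rw [hqdef]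
    simp
  rw [hlast]
  congr 1
  have hterm : ∀ k, k < m → ((q k : ℝ≥0∞))⁻¹ =
      ((l (m + 1 - k) : ℝ≥0∞) + (r (m + 1 - k) : ℝ≥0∞)) / (r (m + 1 - k) : ℝ≥0∞) := by
    intro k hk
    have hr' : r (m + 1 - k) ≠ 0 := (hr (m + 1 - k) (by omega) (by omega)).ne'
    have hd0 : r (m + 1 - k) / (l (m + 1 - k) + r (m + 1 - k)) ≠ 0 :=
      (div_pos (hr (m + 1 - k) (by omega) (by omega))
        (add_pos (hl (m + 1 - k) (by omega) (by omega))
          (hr (m + 1 - k) (by omega) (by omega)))).ne'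
    rw [hqdef]
    simp only [if_pos hk]
    rw [← ENNReal.coe_inv hd0, inv_div, ENNReal.coe_div hr', ENNReal.coe_add]
  calc ∑ k ∈ Finset.range m, ((q k : ℝ≥0∞))⁻¹
      = ∑ k ∈ Finset.range m, (fun j =>
          ((l (j + 2) : ℝ≥0∞) + (r (j + 2) : ℝ≥0∞)) / (r (j + 2) : ℝ≥0∞)) (m - 1 - k) := by
        refine Finset.sum_congr rfl fun k hk => ?_
        have hk' := Finset.mem_range.1 hk
        rw [hterm k hk']
        simp only []
        have he : m - 1 - k + 2 = m + 1 - k := by omega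
        rw [he]
    _ = ∑ k ∈ Finset.range m,
          ((l (k + 2) : ℝ≥0∞) + (r (k + 2) : ℝ≥0∞)) / (r (k + 2) : ℝ≥0∞) :=
        Finset.sum_range_reflect
          (fun j => ((l (j + 2) : ℝ≥0∞) + (r (j + 2) : ℝ≥0∞)) / (r (j + 2) : ℝ≥0∞)) m
    _ = ∑ i ∈ Finset.Icc 2 (m + 1),
        ((l i : ℝ≥0∞) + (r i : ℝ≥0∞)) / (r i : ℝ≥0∞) := by
        rw [← Finset.Ico_add_one_right_eq_Icc, Finset.sum_Ico_eq_sum_range]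
        refine Finset.sum_congr (by congr 1) fun k hk => ?_
        rw [Nat.add_comm 2 k]

end RZFproof

/-- For the weighted bidirectional path on `v₁, …, vₙ`, with
all edge weights positive,
`ept_rzf(P, v₁) = ∑_{i=2}^{n-1} (lᵢ + rᵢ)/lᵢ + 1` and
`ept_rzf(P, vₙ) = ∑_{i=2}^{n-1} (lᵢ + rᵢ)/rᵢ + 1`. -/
theorem rzf_path_ept (n : ℕ) (hn : 2 ≤ n) (l r : ℕ → ℝ≥0)
    (hl : ∀ i : ℕ, 2 ≤ i → i ≤ n → 0 < l i)
    (hr : ∀ i : ℕ, 1 ≤ i → i ≤ n - 1 → 0 < r i) :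
    RZF.ept (pathWeight n l r) {(⟨0, by omega⟩ : Fin n)} =
        (∑ i ∈ Finset.Icc 2 (n - 1),
          ((l i : ℝ≥0∞) + (r i : ℝ≥0∞)) / (l i : ℝ≥0∞)) + 1 ∧
    RZF.ept (pathWeight n l r) {(⟨n - 1, by omega⟩ : Fin n)} =
        (∑ i ∈ Finset.Icc 2 (n - 1),
          ((l i : ℝ≥0∞) + (r i : ℝ≥0∞)) / (r i : ℝ≥0∞)) + 1 := by
  obtain ⟨M, rfl⟩ : ∃ M, n = M + 2 := ⟨n - 2, by omega⟩
  constructor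
  · exact RZFproof.part1 M l r hl hr
  · exact RZFproof.part2 M l r hl hr
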